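/- Let k be an algebraically closed field of characteristic 0, q ∈ k a root of unity of order at least 3, and a ∈ k a nonzero scalar. Let the 3×3 braiding matrix be q_{11} = −1, q_{12} = a, q_{13} = −a⁻², q_{21} = q⁻¹a⁻¹, q_{22} = −1, q_{23} = qa, q_{31} = −a², q_{32} = a⁻¹, q_{33} = −1 (super type A₃ with all diagonal entries −1). Then for every ν ∈ k, the quotient of the free algebra k⟨y_1,y_2,y_3⟩ by the two-sided ideal generated by y_1², y_2², y_3², y_{13}, and [y_{(13)}, y_2]_c − ν is a nontrivial algebra. -/

import Mathlib

/-- The `q`-bilinear form `q(α,β) = ∏ i j, (q i j) ^ (α i * β j)` on `ℕⁿ`-degrees. -/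
noncomputable def qForm {k : Type*} [Field k] {n : ℕ} (q : Fin n → Fin n → k)
    (α β : Fin n → ℕ) : k :=
  ∏ i : Fin n, ∏ j : Fin n, q i j ^ (α i * β j)

/-- The braided commutator on pairs (homogeneous element, its `ℕⁿ`-degree):
`[u,v]_c = u v − q(deg u, deg v) v u`. -/
noncomputable def bc {k : Type*} [Field k] {n : ℕ} (q : Fin n → Fin n → k)
    (u v : FreeAlgebra k (Fin n) × (Fin n → ℕ)) :
    FreeAlgebra k (Fin n) × (Fin n → ℕ) :=
  (u.1 * v.1 - qForm q u.2 v.2 • (v.1 * u.1), fun i => u.2 i + v.2 i)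

/-- The generator `y i` of the free algebra, together with its degree `e_i`. -/
noncomputable def ygen (k : Type*) [Field k] {n : ℕ} (i : Fin n) :
    FreeAlgebra k (Fin n) × (Fin n → ℕ) :=
  (FreeAlgebra.ι k i, fun j => if j = i then 1 else 0)

theorem statement_15 {k : Type*} [Field k] [IsAlgClosed k] [CharZero k]
    (m : ℕ) (hm : 3 ≤ m) (q₀ : k) (hq₀ : IsPrimitiveRoot q₀ m) (a : k) (ha : a ≠ 0)
    (ν : k)
    (q : Fin 3 → Fin 3 → k) (hq : q = ![![-1, a, -(a ^ 2)⁻¹], ![q₀⁻¹ * a⁻¹, -1, q₀ * a], ![-a ^ 2, a⁻¹, -1]]) :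
    (1 : FreeAlgebra k (Fin 3)) ∉ TwoSidedIdeal.span
      ({FreeAlgebra.ι k (0 : Fin 3) ^ 2,
        FreeAlgebra.ι k (1 : Fin 3) ^ 2,
        FreeAlgebra.ι k (2 : Fin 3) ^ 2,
        (bc q (ygen k 0) (ygen k 2)).1,
        (bc q (bc q (ygen k 0) (bc q (ygen k 1) (ygen k 2))) (ygen k 1)).1 - algebraMap k (FreeAlgebra k (Fin 3)) ν} : Set (FreeAlgebra k (Fin 3))) := by
  have hq1 : (1 : k) - q₀ ≠ 0 := by
    have := hq₀.ne_one (by omega)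
    intro h
    exact this (by linear_combination -h)
  -- qForm values
  have qA : qForm q (ygen k 1).2 (ygen k 2).2 = q₀ * a := by
    subst hq; simp [qForm, ygen, Fin.prod_univ_three]
  have qB : qForm q (ygen k 0).2 (bc q (ygen k 1) (ygen k 2)).2 = -a⁻¹ := by
    subst hq; simp [qForm, ygen, bc, Fin.prod_univ_three]; field_simp
  have qC : qForm q (bc q (ygen k 0) (bc q (ygen k 1) (ygen k 2))).2 (ygen k 1).2 = -1 := by
    subst hq; simp [qForm, ygen, bc, Fin.prod_univ_three]; field_simp
  simp only [bc, ygen] at qA qB qC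
  -- the representation
  set c' : k := ν * ((1 : k) - q₀)⁻¹ with hc'
  set E : Matrix (Fin 2) (Fin 2) k := !![0,1;0,0] with hE
  set F : Matrix (Fin 2) (Fin 2) k := !![0,0;1,0] with hF
  set f : Fin 3 → Matrix (Fin 2) (Fin 2) k := ![E, F, c' • E] with hf
  set φ : FreeAlgebra k (Fin 3) →ₐ[k] Matrix (Fin 2) (Fin 2) k := FreeAlgebra.lift k f with hφ
  have hφ0 : φ (FreeAlgebra.ι k (0 : Fin 3)) = E := by simp [hφ, hf]
  have hφ1 : φ (FreeAlgebra.ι k (1 : Fin 3)) = F := by simp [hφ, hf]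
  have hφ2 : φ (FreeAlgebra.ι k (2 : Fin 3)) = c' • E := by simp [hφ, hf]
  have hEE : E * E = 0 := by
    ext i j; fin_cases i <;> fin_cases j <;> simp [hE, Matrix.mul_apply, Fin.sum_univ_two]
  have hFF : F * F = 0 := by
    ext i j; fin_cases i <;> fin_cases j <;> simp [hF, Matrix.mul_apply, Fin.sum_univ_two]
  -- matrix computation steps
  have hD : F * (c' • E) - (q₀ * a) • ((c' • E) * F) = c' • !![-(q₀*a), 0; 0, 1] := by
    ext i j; fin_cases i <;> fin_cases j <;>
      simp [hE, hF, Matrix.mul_apply, Fin.sum_univ_two] <;> ring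
  have hZ : E * (c' • !![-(q₀*a), 0; 0, 1]) - (-a⁻¹) • ((c' • !![-(q₀*a), 0; 0, 1]) * E)
      = (c' * (1 - q₀)) • E := by
    ext i j; fin_cases i <;> fin_cases j <;>
      simp [hE, Matrix.mul_apply, Fin.sum_univ_two] <;> field_simp <;> ring
  have hLast : ((c' * (1 - q₀)) • E) * F - (-1 : k) • (F * ((c' * (1 - q₀)) • E)) - ν • (1 : Matrix (Fin 2) (Fin 2) k) = 0 := by
    have hcv : c' * (1 - q₀) = ν := by
      rw [hc']; field_simp
    rw [hcv]
    ext i j; fin_cases i <;> fin_cases j <;>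
      simp [hE, hF, Matrix.mul_apply, Fin.sum_univ_two, Matrix.one_apply]
  intro hmem
  rw [TwoSidedIdeal.mem_span_iff] at hmem
  have h1 : (1 : FreeAlgebra k (Fin 3)) ∈ TwoSidedIdeal.ker φ.toRingHom := by
    refine hmem _ ?_
    intro x hx
    rw [SetLike.mem_coe, TwoSidedIdeal.mem_ker]
    simp only [Set.mem_insert_iff, Set.mem_singleton_iff] at hx
    rcases hx with rfl | rfl | rfl | rfl | rfl
    · show φ _ = 0
      rw [map_pow, hφ0, pow_two, hEE]
    · show φ _ = 0
      rw [map_pow, hφ1, pow_two, hFF]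
    · show φ _ = 0
      rw [map_pow, hφ2, pow_two, smul_mul_assoc, mul_smul_comm, hEE]
      simp
    · show φ _ = 0
      simp only [bc, ygen, map_sub, map_mul, map_smul, hφ0, hφ2,
        smul_mul_assoc, mul_smul_comm, hEE]
      simp
    · show φ _ = 0
      simp only [bc, ygen, map_sub, map_mul, map_smul, hφ0, hφ1, hφ2, qA, qB, qC,
        AlgHom.commutes, Algebra.algebraMap_eq_smul_one, map_one]
      rw [hD, hZ, hLast]
  rw [TwoSidedIdeal.mem_ker] at h1
  simp only [map_one] at h1
  exact one_ne_zero h1
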